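/- Let h: ℝⁿ → ℝ be quasiconvex and L-Lipschitz continuous on ℝⁿ. Let z ∈ ℝⁿ, let L̄_h(z) denote the closure of the strict sublevel set {x : h(x) < h(z)}, and let g be a unit vector in the normal cone to L̄_h(z) at z. Then for every y ∈ L̄_h(z), one has L·⟨g, y - z⟩ ≤ h(y) - h(z) ≤ 0. -/

import Mathlib

open scoped RealInnerProductSpace

/-- For a quasiconvex `L`-Lipschitz function `h`, a unit normal `g` to the closure of the
strict sublevel set of `h` at `z`, and any `y` in that closure,
`L * ⟪g, y - z⟫ ≤ h y - h z ≤ 0`. -/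
theorem normal_subgradient_ineq {n : ℕ}
    (h : EuclideanSpace ℝ (Fin n) → ℝ)
    (hq : ∀ c : ℝ, Convex ℝ {x | h x < c})
    (L : ℝ) (hL : 0 ≤ L)
    (hlip : ∀ x y, |h x - h y| ≤ L * ‖x - y‖)
    (z : EuclideanSpace ℝ (Fin n))
    (g : EuclideanSpace ℝ (Fin n)) (hg : ‖g‖ = 1)
    (hgnormal : ∀ x ∈ closure {x | h x < h z}, ⟪g, x - z⟫ ≤ 0) :
    ∀ y ∈ closure {x | h x < h z},
      L * ⟪g, y - z⟫ ≤ h y - h z ∧ h y - h z ≤ 0 := by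
  have hcont : Continuous h := by
    have : LipschitzWith ⟨L, hL⟩ h := by
      apply LipschitzWith.of_dist_le_mul
      intro x y
      rw [Real.dist_eq, dist_eq_norm]
      exact hlip x y
    exact this.continuous
  intro y hy
  have hle : h y ≤ h z := by
    have hsub : closure {x | h x < h z} ⊆ {x | h x ≤ h z} :=
      closure_minimal (fun x hx => show h x ≤ h z from le_of_lt hx) (isClosed_le hcont continuous_const)
    exact hsub hy
  refine ⟨?_, by linarith⟩
  set t : ℝ := ⟪g, z - y⟫ with ht
  have hflip : ⟪g, y - z⟫ = -t := by
    rw [ht, inner_sub_right, inner_sub_right]; ring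
  have htnn : 0 ≤ t := by
    have := hgnormal y hy
    rw [hflip] at this; linarith
  have key : ∀ ε > (0:ℝ), h z - h y ≤ L * (t + ε) := by
    intro ε hε
    set w := y + (t + ε) • g with hw
    have hwz : ⟪g, w - z⟫ = ε := by
      have : ⟪g, w - z⟫ = ⟪g, y - z⟫ + (t + ε) * ⟪g, g⟫ := by
        rw [hw]; rw [show y + (t + ε) • g - z = (y - z) + (t + ε) • g by abel]
        rw [inner_add_right, inner_smul_right]
      rw [this, real_inner_self_eq_norm_sq, hg, hflip]; ring
    have hwge : h z ≤ h w := by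
      by_contra hlt
      push_neg at hlt
      have hmem : w ∈ closure {x | h x < h z} := subset_closure hlt
      have := hgnormal w hmem
      rw [hwz] at this; linarith
    have hbd : h w - h y ≤ L * (t + ε) := by
      calc h w - h y ≤ |h w - h y| := le_abs_self _
        _ ≤ L * ‖w - y‖ := hlip w y
        _ = L * (t + ε) := by
            rw [hw, show y + (t + ε) • g - y = (t + ε) • g by abel, norm_smul, hg]
            rw [Real.norm_eq_abs, abs_of_pos (by linarith)]; ring
    linarith
  have hfin : h z - h y ≤ L * t := by
    apply le_of_forall_pos_le_add
    intro δ hδ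
    have hε : (0:ℝ) < δ / (L + 1) := by positivity
    have := key (δ / (L + 1)) hε
    have hLd : L * (δ / (L + 1)) ≤ δ := by
      have heq : (L + 1) * (δ / (L + 1)) = δ := by field_simp
      nlinarith [mul_le_mul_of_nonneg_right (show L ≤ L + 1 by linarith) (le_of_lt hε)]
    nlinarith
  rw [hflip]; linarith
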